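/- arXiv:2008.13209 — 6 statements merged into one kernel-verified Lean document; each statement's English description precedes it below -/
import Mathlib

section
/- (Periodicity Lemma of Fine and Wilf) If p and q are periods of a word w and |w| ≥ p + q − gcd(p, q), then gcd(p, q) is also a period of w. -/
/-- `p` is a period of `w` if `0 < p ≤ |w|` and `w[i] = w[i+p]` whenever both
indices are valid (0-indexed). -/
def IsPeriod {A : Type*} (w : List A) (p : ℕ) : Prop :=
  0 < p ∧ p ≤ w.length ∧ ∀ i : ℕ, i + p < w.length → w[i]? = w[i + p]?

/-- The shortest period of a word. -/
noncomputable def minPer {A : Type*} (w : List A) : ℕ :=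
  sInf {p | IsPeriod w p}

private lemma period_chain {A : Type*} (w : List A) (r : ℕ) (h : IsPeriod w r) :
    ∀ k i : ℕ, i + k * r < w.length → w[i]? = w[i + k * r]? := by
  intro k
  induction k with
  | zero => simp
  | succ k ih =>
    intro i hi
    have hr : 0 < r := h.1
    have heq : i + (k + 1) * r = (i + k * r) + r := by ring
    have h1 : i + k * r + r < w.length := by omega
    have h2 : i + k * r < w.length := by omega
    rw [heq]
    calc w[i]? = w[i + k * r]? := ih i (by omega)
    _ = w[i + k * r + r]? := h.2.2 _ h1

private lemma period_cong {A : Type*} (w : List A) (r : ℕ) (h : IsPeriod w r)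
    {i j : ℕ} (hij : i ≤ j) (hj : j < w.length) (hd : r ∣ j - i) :
    w[i]? = w[j]? := by
  obtain ⟨k, hk⟩ := hd
  rw [mul_comm] at hk
  have hj' : j = i + k * r := by omega
  rw [hj']
  exact period_chain w r h k i (by omega)

private lemma fw_aux {A : Type*} :
    ∀ n : ℕ, ∀ w : List A, ∀ p q : ℕ, p ≤ q → p + q ≤ n →
      IsPeriod w p → IsPeriod w q → p + q - Nat.gcd p q ≤ w.length →
      ∀ i j : ℕ, i ≤ j → j < w.length → Nat.gcd p q ∣ j - i →
        w[i]? = w[j]? := by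
  intro n
  induction n with
  | zero =>
    intro w p q _ hn hp
    exact absurd hn (by have := hp.1; omega)
  | succ n ih =>
    intro w p q hpq hn hp hq hlen i j hij hj hd
    rcases eq_or_lt_of_le hpq with heq | hlt
    · subst heq
      rw [Nat.gcd_self] at hd
      exact period_cong w p hp hij hj hd
    · -- p < q
      set g := Nat.gcd p q with hg
      have hp0 : 0 < p := hp.1
      have hd0 : 0 < q - p := by omega
      have hgd : Nat.gcd p (q - p) = g := Nat.gcd_sub_self_right (le_of_lt hlt)
      have hgp : g ∣ p := Nat.gcd_dvd_left p q
      have hgle_p : g ≤ p := Nat.le_of_dvd hp0 hgp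
      have hgdvd_d : g ∣ q - p := hgd ▸ Nat.gcd_dvd_right p (q - p)
      have hgle_d : g ≤ q - p := Nat.le_of_dvd hd0 hgdvd_d
      have h2p : 2 * p ≤ w.length := by omega
      set m := w.length - p with hm
      -- the prefix of length m has periods p and q - p
      have htake : ∀ i : ℕ, i < m → (w.take m)[i]? = w[i]? := by
        intro i hi
        exact List.getElem?_take_of_lt hi
      have hlentake : (w.take m).length = m := by
        rw [List.length_take]
        omega
      have hwp : IsPeriod (w.take m) p := by
        refine ⟨hp0, by omega, ?_⟩
        intro i hi
        rw [hlentake] at hi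
        rw [htake i (by omega), htake (i + p) hi]
        exact hp.2.2 i (by omega)
      have hwd : IsPeriod (w.take m) (q - p) := by
        refine ⟨hd0, by omega, ?_⟩
        intro i hi
        rw [hlentake] at hi
        rw [htake i (by omega), htake (i + (q - p)) hi]
        have h1 : w[i]? = w[i + q]? := hq.2.2 i (by omega)
        have h2 : w[i + (q - p)]? = w[i + (q - p) + p]? := hp.2.2 _ (by omega)
        have h3 : i + (q - p) + p = i + q := by omega
        rw [h2, h3, h1]
      have hlentake' : ∀ r s : ℕ, r + s = p + (q - p) → Nat.gcd r s = g →
          r + s - Nat.gcd r s ≤ (w.take m).length := by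
        intro r s hrs hgcd
        rw [hlentake, hrs, hgcd]
        omega
      -- key congruence on the prefix
      have key : ∀ i j : ℕ, i ≤ j → j < m → g ∣ j - i →
          w[i]? = w[j]? := by
        intro i j hij' hj' hd'
        rw [← htake i (by omega), ← htake j hj']
        rcases le_total p (q - p) with hle | hle
        · exact ih (w.take m) p (q - p) hle (by omega) hwp hwd
            (hlentake' p (q - p) rfl hgd) i j hij' (by omega) (hgd ▸ hd')
        · have hgd' : Nat.gcd (q - p) p = g := by rw [Nat.gcd_comm]; exact hgd
          exact ih (w.take m) (q - p) p hle (by omega) hwd hwp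
            (hlentake' (q - p) p (by omega) hgd') i j hij' (by omega) (hgd' ▸ hd')
      -- extend to the whole word by strong induction on j
      have main : ∀ j : ℕ, ∀ i : ℕ, i ≤ j → j < w.length → g ∣ j - i →
          w[i]? = w[j]? := by
        intro j
        induction j using Nat.strong_induction_on with
        | _ j ihj =>
          intro i hij hj hd
          rcases eq_or_lt_of_le hij with rfl | hij'
          · rfl
          by_cases hjm : j < m
          · exact key i j hij hjm hd
          · -- j ≥ m, and m ≥ p so j ≥ p
            have hjp : p ≤ j := by omega
            have hstep : w[j - p]? = w[j]? := by
              have := hp.2.2 (j - p) (by omega)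
              rwa [Nat.sub_add_cancel hjp] at this
            rcases le_total i (j - p) with hle | hle
            · have hd' : g ∣ (j - p) - i := by
                have : (j - p) - i = (j - i) - p := by omega
                rw [this]
                exact Nat.dvd_sub hd hgp
              rw [← hstep]
              exact ihj (j - p) (by omega) i hle (by omega) hd'
            · have hd' : g ∣ i - (j - p) := by
                have : i - (j - p) = p - (j - i) := by omega
                rw [this]
                exact Nat.dvd_sub hgp hd
              rw [← hstep]
              exact (ihj i (by omega) (j - p) hle (by omega) hd').symm
      exact main j i hij hj hd

/-- Periodicity Lemma (Fine and Wilf): if `p` and `q` are periods of `w` and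
`|w| ≥ p + q − gcd(p,q)`, then `gcd(p,q)` is also a period of `w`. -/
theorem fine_wilf {A : Type*} (w : List A) (p q : ℕ)
    (hp : IsPeriod w p) (hq : IsPeriod w q)
    (hlen : p + q - Nat.gcd p q ≤ w.length) :
    IsPeriod w (Nat.gcd p q) := by
  have hg0 : 0 < Nat.gcd p q := Nat.gcd_pos_of_pos_left q hp.1
  have hgle : Nat.gcd p q ≤ p := Nat.le_of_dvd hp.1 (Nat.gcd_dvd_left p q)
  refine ⟨hg0, le_trans hgle hp.2.1, ?_⟩
  intro i hi
  have hdvd : Nat.gcd p q ∣ (i + Nat.gcd p q) - i := by simp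
  rcases le_total p q with hle | hle
  · exact fw_aux (p + q) w p q hle le_rfl hp hq hlen i (i + Nat.gcd p q)
      (by omega) hi hdvd
  · have hgc : Nat.gcd q p = Nat.gcd p q := Nat.gcd_comm q p
    exact fw_aux (p + q) w q p hle (by omega) hq hp (by rw [hgc]; omega)
      i (i + Nat.gcd p q) (by omega) hi (hgc ▸ hdvd)
end

section
/- Let u be a nonempty word with a period p, and let v be a factor (contiguous substring) of u with 2p ≤ |v|. Then per(u) = per(v). -/
private lemma get_factor {A : Type*} {u v x y : List A} (hfac : u = x ++ v ++ y)
    {i : ℕ} (hi : i < v.length) : u[x.length + i]? = v[i]? := by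
  subst hfac
  rw [List.getElem?_append_left (by simp; omega), List.getElem?_append_right (by omega)]
  congr 1
  omega

/-- jumping by multiples of p -/
private lemma period_jump {A : Type*} {u : List A} {p : ℕ} (hp : IsPeriod u p) :
    ∀ k i, i + k * p < u.length → u[i]? = u[i + k * p]? := by
  intro k
  induction k with
  | zero => simp
  | succ k ih =>
    intro i hi
    have h1 : i + k * p < u.length := by nlinarith [hp.1]
    rw [ih i h1]
    have := hp.2.2 (i + k * p) (by ring_nf; ring_nf at hi; omega)
    rw [this]
    ring_nf

/-- restriction of a period to a factor -/
private lemma isPeriod_restrict {A : Type*} {u v x y : List A} {q : ℕ}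
    (hq : IsPeriod u q) (hfac : u = x ++ v ++ y) (hle : q ≤ v.length) :
    IsPeriod v q := by
  refine ⟨hq.1, hle, fun i hi => ?_⟩
  have h1 := get_factor hfac (show i < v.length by omega)
  have h2 := get_factor hfac hi
  have hlen : x.length + v.length ≤ u.length := by subst hfac; simp
  have := hq.2.2 (x.length + i) (by omega)
  rw [← h1, ← h2, this]
  congr 1
  omega

/-- weak Fine–Wilf: if `p + q ≤ |w|` then `gcd p q` is a period. -/
private lemma isPeriod_gcd {A : Type*} (w : List A) :
    ∀ n p q, p + q ≤ n → p + q ≤ w.length → IsPeriod w p → IsPeriod w q →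
      IsPeriod w (Nat.gcd p q) := by
  intro n
  induction n with
  | zero => intro p q h _ hp _; exact absurd hp.1 (by omega)
  | succ n ih =>
    intro p q hn hw hp hq
    have hp0 : 0 < p := hp.1
    have hq0 : 0 < q := hq.1
    rcases lt_trichotomy p q with h | h | h
    · -- p < q : replace q by q - p
      have hqp : IsPeriod w (q - p) := by
        refine ⟨by omega, by omega, fun i hi => ?_⟩
        by_cases hc : i + q < w.length
        · rw [hq.2.2 i hc]
          have h3 := hp.2.2 (i + (q - p)) (by omega)
          rw [h3, show i + (q - p) + p = i + q from by omega]
        · have hip : p ≤ i := by omega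
          have h1 := hp.2.2 (i - p) (by omega)
          have h2 := hq.2.2 (i - p) (by omega)
          rw [show i - p + p = i from by omega] at h1
          rw [show i - p + q = i + (q - p) from by omega] at h2
          rw [← h1, h2]
      have h4 := ih p (q - p) (by omega) (by omega) hp hqp
      rwa [Nat.gcd_sub_self_right (by omega)] at h4
    · subst h; rwa [Nat.gcd_self]
    · have hpq : IsPeriod w (p - q) := by
        refine ⟨by omega, by omega, fun i hi => ?_⟩
        by_cases hc : i + p < w.length
        · rw [hp.2.2 i hc]
          have h3 := hq.2.2 (i + (p - q)) (by omega)
          rw [h3, show i + (p - q) + q = i + p from by omega]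
        · have hip : q ≤ i := by omega
          have h1 := hq.2.2 (i - q) (by omega)
          have h2 := hp.2.2 (i - q) (by omega)
          rw [show i - q + q = i from by omega] at h1
          rw [show i - q + p = i + (p - q) from by omega] at h2
          rw [← h1, h2]
      have h4 := ih (p - q) q (by omega) (by omega) hpq hq
      rwa [Nat.gcd_sub_self_left (by omega)] at h4

/-- lifting a divisor-period from the factor back to the whole word -/
private lemma isPeriod_lift {A : Type*} {u v x y : List A} {p g : ℕ}
    (hp : IsPeriod u p) (hfac : u = x ++ v ++ y) (hlen : 2 * p ≤ v.length)
    (hg : IsPeriod v g) (hdvd : g ∣ p) : IsPeriod u g := by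
  set a := x.length with ha
  have hgp : g ≤ p := Nat.le_of_dvd hp.1 hdvd
  have hg0 : 0 < g := hg.1
  have hp0 : 0 < p := hp.1
  have huv : a + v.length + y.length = u.length := by subst hfac; simp [ha]; omega
  -- window step
  have hwin : ∀ i, a ≤ i → i + g < a + v.length → u[i]? = u[i + g]? := by
    intro i h1 h2
    have e1 := get_factor hfac (show i - a < v.length by omega)
    have e2 := get_factor hfac (show i + g - a < v.length by omega)
    rw [show a + (i - a) = i by omega] at e1
    rw [show a + (i + g - a) = i + g by omega] at e2
    rw [e1, e2, hg.2.2 (i - a) (by omega)]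
    congr 1
    omega
  -- indices at or beyond the window start
  have W : ∀ i, a ≤ i → i + g < u.length → u[i]? = u[i + g]? := by
    intro i
    induction i using Nat.strong_induction_on with
    | _ i ih =>
      intro hai hi
      by_cases hc : i + g < a + v.length
      · exact hwin i hai hc
      · have hi2 : a + p ≤ i := by omega
        have key := ih (i - p) (by omega) (by omega) (by omega)
        have h1 := hp.2.2 (i - p) (by omega)
        have h2 := hp.2.2 (i - p + g) (by omega)
        rw [show i = i - p + p by omega, show i - p + p + g = i - p + g + p by omega,
          ← h1, ← h2]
        exact key
  -- all indices
  have P : ∀ n i, a ≤ i + n → i + g < u.length → u[i]? = u[i + g]? := by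
    intro n
    induction n with
    | zero => intro i h1 h2; exact W i (by omega) h2
    | succ n ih =>
      intro i h1 h2
      by_cases hc : a ≤ i
      · exact W i hc h2
      · have hb : i + p + g < u.length := by omega
        have key := ih (i + p) (by omega) hb
        have h3 := hp.2.2 i (by omega)
        have h4 := hp.2.2 (i + g) (by omega)
        rw [h3, h4, show i + g + p = i + p + g by omega]
        exact key
  exact ⟨hg0, by omega, fun i hi => P a i (by omega) hi⟩

/-- If a nonempty word `u` has a period `p` and `v` is a factor of `u` with
`2p ≤ |v|`, then `u` and `v` have the same shortest period. -/
theorem minPer_factor {A : Type*} (u v x y : List A) (p : ℕ)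
    (hu : u ≠ []) (hp : IsPeriod u p)
    (hfac : u = x ++ v ++ y) (hlen : 2 * p ≤ v.length) :
    minPer u = minPer v := by
  have hp0 : 0 < p := hp.1
  have hpv : p ≤ v.length := by omega
  have hpv' : IsPeriod v p := isPeriod_restrict hp hfac hpv
  have hune : {q | IsPeriod u q}.Nonempty := ⟨p, hp⟩
  have hvne : {q | IsPeriod v q}.Nonempty := ⟨p, hpv'⟩
  have hsu : IsPeriod u (minPer u) := Nat.sInf_mem hune
  have hsv : IsPeriod v (minPer v) := Nat.sInf_mem hvne
  have hsu_le : minPer u ≤ p := Nat.sInf_le hp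
  have hsv_le : minPer v ≤ p := Nat.sInf_le hpv'
  -- minPer v ≤ minPer u
  have h1 : minPer v ≤ minPer u :=
    Nat.sInf_le (isPeriod_restrict hsu hfac (by omega))
  -- gcd of p and minPer v is a period of v
  have hg : IsPeriod v (Nat.gcd p (minPer v)) :=
    isPeriod_gcd v (p + minPer v) p (minPer v) le_rfl (by omega) hpv' hsv
  have hlift : IsPeriod u (Nat.gcd p (minPer v)) :=
    isPeriod_lift hp hfac hlen hg (Nat.gcd_dvd_left _ _)
  have h2 : minPer u ≤ minPer v :=
    le_trans (Nat.sInf_le hlift) (Nat.le_of_dvd hsv.1 (Nat.gcd_dvd_right _ _))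
  omega
end

section
/- Suppose u and v are palindromes and v is a suffix of u. Then v is also a prefix of u, and if moreover |v| < |u|, then |u| − |v| is a period of u. -/
/-- If palindromes `u`, `v` satisfy that `v` is a suffix of `u`, then `v` is also a
prefix of `u`, and if `|v| < |u|` then `|u| − |v|` is a period of `u`. -/
theorem pal_suffix_period {A : Type*} (u v : List A)
    (hu : u.reverse = u) (hv : v.reverse = v) (hsuf : v <:+ u) :
    v <+: u ∧ (v.length < u.length → IsPeriod u (u.length - v.length)) := by
  have hpre : v <+: u := by
    rw [← hu, ← hv]
    exact List.reverse_prefix.mpr hsuf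
  refine ⟨hpre, fun hlt => ?_⟩
  obtain ⟨x, hx⟩ := hsuf
  obtain ⟨y, hy⟩ := hpre
  have hxlen : x.length = u.length - v.length := by
    have := congrArg List.length hx
    simp at this
    omega
  refine ⟨by omega, by omega, fun i hi => ?_⟩
  have hiv : i < v.length := by omega
  have h1 : u[i]? = v[i]? := by
    rw [← hy,
      List.getElem?_append_left hiv]
  have h2 : (x ++ v)[x.length + i]? = v[i]? := by
    rw [
      List.getElem?_append_right (Nat.le_add_right _ _)]
    simp
  rw [h1, ← h2, hx]
  congr 1
  omega
end

section
/- Let n ≥ 1 be an integer and set α = ⌈2√n⌉. Let C_1, C_2, …, C_m be palindromic words such that C_{j+1} is a proper suffix of C_j for every 1 ≤ j < m, with |C_1| ≤ n and m > α. Then per(C_α) ≤ √n / 2, and moreover for every index i with α ≤ i ≤ m such that |C_i| ≥ √n, one has per(C_i) = per(C_α). -/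
lemma isPeriod_length {A : Type*} {w : List A} (h : 0 < w.length) :
    IsPeriod w w.length :=
  ⟨h, le_rfl, fun i hi => absurd hi (by omega)⟩

lemma isPeriod_of_suffix {A : Type*} {v w : List A} {p : ℕ} (hvw : v <:+ w)
    (hp : IsPeriod w p) (hle : p ≤ v.length) : IsPeriod v p := by
  obtain ⟨t, ht⟩ := hvw
  have htl : t.length + v.length = w.length := by rw [← ht]; simp
  have hget : ∀ k, w[t.length + k]? = v[k]? := by
    intro k
    rw [← ht, List.getElem?_append_right (by omega)]
    congr 1; omega
  refine ⟨hp.1, hle, fun i hi => ?_⟩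
  rw [← hget i, ← hget (i + p)]
  have h := hp.2.2 (t.length + i) (by omega)
  rw [h]; congr 1; omega

lemma prefix_of_pal_suffix {A : Type*} {v w : List A} (hvw : v <:+ w)
    (hv : v.reverse = v) (hw : w.reverse = w) : v <+: w := by
  apply List.reverse_suffix.mp
  rw [hv, hw]; exact hvw

lemma isPeriod_of_border {A : Type*} {v w : List A} (hs : v <:+ w) (hp : v <+: w)
    (hlt : v.length < w.length) : IsPeriod w (w.length - v.length) := by
  obtain ⟨t, ht⟩ := hs
  obtain ⟨s, hsx⟩ := hp
  have htl : t.length + v.length = w.length := by rw [← ht]; simp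
  refine ⟨by omega, by omega, fun i hi => ?_⟩
  have hiv : i < v.length := by omega
  have h1 : w[i]? = v[i]? := by
    rw [← hsx, List.getElem?_append_left hiv]
  have h2 : w[t.length + i]? = v[i]? := by
    rw [← ht, List.getElem?_append_right (by omega)]
    congr 1; omega
  have e : i + (w.length - v.length) = t.length + i := by omega
  rw [h1, e, h2]

lemma isPeriod_sub {A : Type*} {w : List A} {p q : ℕ} (hp : IsPeriod w p)
    (hq : IsPeriod w q) (hlt : q < p) (hsum : p + q ≤ w.length) :
    IsPeriod w (p - q) := by
  refine ⟨by omega, by omega, fun i hi => ?_⟩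
  by_cases hc : i + p < w.length
  · have h1 := hp.2.2 i hc
    have h2 := hq.2.2 (i + (p - q)) (by omega)
    have e : i + (p - q) + q = i + p := by omega
    rw [e] at h2
    rw [h1, h2]
  · have hiq : q ≤ i := by omega
    have h1 := hq.2.2 (i - q) (by omega)
    have h2 := hp.2.2 (i - q) (by omega)
    have e1 : i - q + q = i := by omega
    have e2 : i - q + p = i + (p - q) := by omega
    rw [e1] at h1
    rw [e2] at h2
    rw [← h1, h2]

lemma fineWilf {A : Type*} : ∀ (N : ℕ) (w : List A) (p q : ℕ), p + q ≤ N →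
    IsPeriod w p → IsPeriod w q → p + q ≤ w.length → IsPeriod w (Nat.gcd p q) := by
  intro N
  induction N with
  | zero => intro w p q hN hp _ _; exact absurd hp.1 (by omega)
  | succ N ih =>
    intro w p q hN hp hq hlen
    rcases lt_trichotomy p q with h | h | h
    · have hsub := isPeriod_sub hq hp h (by omega)
      rw [Nat.gcd_comm, ← Nat.gcd_sub_self_left (le_of_lt h)]
      exact ih w (q - p) p (by have := hp.1; omega) hsub hp
        (by have := hq.2.1; omega)
    · subst h; rw [Nat.gcd_self]; exact hp
    · have hsub := isPeriod_sub hp hq h hlen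
      rw [← Nat.gcd_sub_self_left (le_of_lt h)]
      exact ih w (p - q) q (by have := hq.1; omega) hsub hq
        (by have := hp.2.1; omega)

lemma isPeriod_extend {A : Type*} {w u : List A} {p g : ℕ} (hp : IsPeriod w p)
    (hu : u <+: w) (hgu : IsPeriod u g) (hlen : p + g ≤ u.length) :
    IsPeriod w g := by
  obtain ⟨s, hsx⟩ := hu
  have hul : u.length ≤ w.length := by rw [← hsx, List.length_append]; omega
  have hg1 := hgu.1
  have hp1 := hp.1
  refine ⟨hgu.1, by omega, fun i => ?_⟩
  induction i using Nat.strong_induction_on with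
  | _ i ih =>
    intro hi
    by_cases hc : i + g < u.length
    · have h1 : w[i]? = u[i]? := by rw [← hsx, List.getElem?_append_left (by omega)]
      have h2 : w[i + g]? = u[i + g]? := by
        rw [← hsx, List.getElem?_append_left (by omega)]
      rw [h1, h2]; exact hgu.2.2 i hc
    · have hip : p ≤ i := by omega
      have h1 := hp.2.2 (i - p) (by omega)
      have h2 := hp.2.2 (i + g - p) (by omega)
      have e1 : i - p + p = i := by omega
      have e2 : i + g - p + p = i + g := by omega
      rw [e1] at h1
      rw [e2] at h2
      have h3 := ih (i - p) (by have := hp.1; omega) (by omega)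
      have e3 : i - p + g = i + g - p := by omega
      rw [e3] at h3
      rw [← h1, h3, h2]

/-- For a chain `C_1, …, C_m` of palindromes, each a proper suffix of the previous,
with `|C_1| ≤ n` and `m > α` where `α = ⌈2√n⌉`: the shortest period of `C_α` is at
most `√n / 2`, and every `C_i` with `α ≤ i ≤ m` and `|C_i| ≥ √n` has the same
shortest period as `C_α`. -/
theorem middle_palindromes_periodic {A : Type*} (n m : ℕ) (hn : 1 ≤ n)
    (α : ℕ) (hα : α = ⌈2 * Real.sqrt n⌉₊) (C : ℕ → List A)
    (hpal : ∀ j, 1 ≤ j → j ≤ m → (C j).reverse = C j)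
    (hsuf : ∀ j, 1 ≤ j → j < m →
      C (j + 1) <:+ C j ∧ (C (j + 1)).length < (C j).length)
    (hC1 : (C 1).length ≤ n) (hm : α < m) :
    (minPer (C α) : ℝ) ≤ Real.sqrt n / 2 ∧
    ∀ i, α ≤ i → i ≤ m → Real.sqrt n ≤ ((C i).length : ℝ) →
      minPer (C i) = minPer (C α) := by
  have hs1 : (1 : ℝ) ≤ Real.sqrt n := Real.one_le_sqrt.mpr (by exact_mod_cast hn)
  have hs0 : (0 : ℝ) ≤ Real.sqrt n := by linarith
  have hαs : 2 * Real.sqrt n ≤ (α : ℝ) := hα ▸ Nat.le_ceil _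
  have hα2 : 2 ≤ α := by
    have : (2 : ℝ) ≤ (α : ℝ) := by linarith
    exact_mod_cast this
  -- chain suffix lemma
  have hchain : ∀ a b, 1 ≤ a → a ≤ b → b ≤ m → C b <:+ C a := by
    intro a b ha hab
    induction b, hab using Nat.le_induction with
    | base => intro _; exact List.suffix_refl _
    | succ b hab ih =>
      intro hbm
      exact ((hsuf b (by omega) (by omega)).1).trans (ih (by omega))
  have hCαpos : 0 < (C α).length := by
    have := (hsuf α (by omega) hm).2
    omega
  set P := minPer (C α) with hPdef
  have hSne : {p | IsPeriod (C α) p}.Nonempty := ⟨_, isPeriod_length hCαpos⟩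
  have hP : IsPeriod (C α) P := Nat.sInf_mem hSne
  have hPle : ∀ p, IsPeriod (C α) p → P ≤ p := fun p hp => Nat.sInf_le hp
  -- Part (i)
  have part1 : (P : ℝ) ≤ Real.sqrt n / 2 := by
    by_cases hbig : ((C α).length : ℝ) ≤ Real.sqrt n / 2
    · have : P ≤ (C α).length := hPle _ (isPeriod_length hCαpos)
      calc (P : ℝ) ≤ ((C α).length : ℝ) := by exact_mod_cast this
        _ ≤ _ := hbig
    · push_neg at hbig
      set d : ℕ → ℕ := fun j => (C j).length - (C (j + 1)).length with hd
      -- telescoping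
      have htel : ∀ k, 1 ≤ k → k ≤ α →
          (∑ j ∈ Finset.Ico 1 k, d j) + (C k).length = (C 1).length := by
        intro k hk
        induction k, hk using Nat.le_induction with
        | base => intro _; simp
        | succ k hk ih =>
          intro hkα
          rw [Finset.sum_Ico_succ_top hk]
          have hdk := (hsuf k (by omega) (by omega)).2
          have hih := ih (by omega)
          have hdval : d k = (C k).length - (C (k + 1)).length := rfl
          omega
      have hsum := htel α (by omega) le_rfl
      -- pigeonhole
      have hexists : ∃ j, 1 ≤ j ∧ j < α ∧ ((d j : ℝ)) ≤ Real.sqrt n / 2 := by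
        by_contra hno
        push_neg at hno
        have hlb : ((α - 1 : ℕ) : ℝ) * (Real.sqrt n / 2) ≤
            ∑ j ∈ Finset.Ico 1 α, ((d j : ℝ)) := by
          have := Finset.card_nsmul_le_sum (Finset.Ico 1 α)
            (fun j => ((d j : ℝ))) (Real.sqrt n / 2)
            (fun j hj => by
              rw [Finset.mem_Ico] at hj
              exact le_of_lt (hno j hj.1 hj.2))
          simpa [Nat.card_Ico, nsmul_eq_mul] using this
        have hsumR : (∑ j ∈ Finset.Ico 1 α, ((d j : ℝ))) =
            ((C 1).length : ℝ) - ((C α).length : ℝ) := by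
          rw [← Nat.cast_sum]
          have : (∑ j ∈ Finset.Ico 1 α, d j) = (C 1).length - (C α).length := by
            omega
          rw [this, Nat.cast_sub (by omega)]
        have hcast : ((α - 1 : ℕ) : ℝ) = (α : ℝ) - 1 := by
          rw [Nat.cast_sub (by omega)]; norm_num
        rw [hcast, hsumR] at hlb
        have hnn : Real.sqrt n * Real.sqrt n = (n : ℝ) :=
          Real.mul_self_sqrt (by positivity)
        have hC1R : (((C 1).length : ℕ) : ℝ) ≤ (n : ℝ) := by exact_mod_cast hC1
        have hmul : (2 * Real.sqrt n - 1) * (Real.sqrt n / 2) ≤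
            ((α : ℝ) - 1) * (Real.sqrt n / 2) := by
          apply mul_le_mul_of_nonneg_right (by linarith) (by linarith)
        nlinarith [hmul, hlb, hC1R, hbig, hnn]
      obtain ⟨j, hj1, hjα, hjle⟩ := hexists
      have hjm : j < m := by omega
      have hper : IsPeriod (C j) (d j) := by
        have hsj := (hsuf j hj1 hjm).1
        have hpj := prefix_of_pal_suffix hsj (hpal (j + 1) (by omega) (by omega))
          (hpal j hj1 (by omega))
        exact isPeriod_of_border hsj hpj (hsuf j hj1 hjm).2
      have hsufα : C α <:+ C j := hchain j α hj1 (by omega) (by omega)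
      by_cases hdl : d j ≤ (C α).length
      · have hperα := isPeriod_of_suffix hsufα hper hdl
        have : P ≤ d j := hPle _ hperα
        calc (P : ℝ) ≤ (d j : ℝ) := by exact_mod_cast this
          _ ≤ _ := hjle
      · have : P ≤ (C α).length := hPle _ (isPeriod_length hCαpos)
        have h2 : ((C α).length : ℝ) ≤ (d j : ℝ) := by
          exact_mod_cast le_of_lt (by omega : (C α).length < d j)
        calc (P : ℝ) ≤ ((C α).length : ℝ) := by exact_mod_cast this
          _ ≤ (d j : ℝ) := h2
          _ ≤ _ := hjle
  refine ⟨part1, fun i hαi him hleni => ?_⟩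
  rcases eq_or_lt_of_le hαi with rfl | hαi'
  · rfl
  · have hi1 : 1 ≤ i := by omega
    have hαm : α ≤ m := by omega
    have hCisuf : C i <:+ C α := hchain α i (by omega) (le_of_lt hαi') him
    have hCipre : C i <+: C α := prefix_of_pal_suffix hCisuf
      (hpal i hi1 him) (hpal α (by omega) hαm)
    have hCilen : 0 < (C i).length := by
      have h : (0 : ℝ) < ((C i).length : ℝ) := by linarith
      exact_mod_cast h
    have hPleni : P ≤ (C i).length := by
      have : (P : ℝ) ≤ ((C i).length : ℝ) := by linarith
      exact_mod_cast this
    have hPi : IsPeriod (C i) P := isPeriod_of_suffix hCisuf hP hPleni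
    set Q := minPer (C i) with hQdef
    have hQ : IsPeriod (C i) Q :=
      Nat.sInf_mem (⟨_, isPeriod_length hCilen⟩ : {p | IsPeriod (C i) p}.Nonempty)
    have hQP : Q ≤ P := Nat.sInf_le hPi
    have hsumPQ : P + Q ≤ (C i).length := by
      have hQr : (Q : ℝ) ≤ (P : ℝ) := by exact_mod_cast hQP
      have : ((P + Q : ℕ) : ℝ) ≤ ((C i).length : ℝ) := by
        push_cast; linarith
      exact_mod_cast this
    have hg : IsPeriod (C i) (Nat.gcd P Q) :=
      fineWilf (P + Q) (C i) P Q le_rfl hPi hQ hsumPQ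
    have hgle : Nat.gcd P Q ≤ Q := Nat.gcd_le_right _ hQ.1
    have hext : IsPeriod (C α) (Nat.gcd P Q) :=
      isPeriod_extend hP hCipre hg (by omega)
    have hPg : P ≤ Nat.gcd P Q := hPle _ hext
    omega
end

section
/- Let n be a nonnegative real number and let a_1, …, a_k be nonnegative real numbers with a_1 + ⋯ + a_k ≤ n. Then Σ_{i=1}^{k} min(a_i², n) ≤ n^{3/2}. -/
/-- If nonnegative reals `a_1, …, a_k` sum to at most `n`, then
`Σ min(a_i², n) ≤ n^{3/2}`. -/
theorem sum_min_sq_le {k : ℕ} (n : ℝ) (hn : 0 ≤ n) (a : Fin k → ℝ)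
    (ha : ∀ i, 0 ≤ a i) (hsum : ∑ i, a i ≤ n) :
    ∑ i, min ((a i) ^ 2) n ≤ n ^ ((3 : ℝ) / 2) := by
  have hs : (0:ℝ) ≤ Real.sqrt n := Real.sqrt_nonneg n
  have key : ∀ i, min ((a i) ^ 2) n ≤ a i * Real.sqrt n := by
    intro i
    rcases le_total (a i) (Real.sqrt n) with h | h
    · exact le_trans (min_le_left _ _)
        (by rw [sq]; exact mul_le_mul_of_nonneg_left h (ha i))
    · refine le_trans (min_le_right _ _) ?_
      have := mul_le_mul_of_nonneg_right h hs
      rwa [Real.mul_self_sqrt hn] at this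
  calc ∑ i, min ((a i) ^ 2) n ≤ ∑ i, a i * Real.sqrt n :=
        Finset.sum_le_sum fun i _ => key i
    _ = (∑ i, a i) * Real.sqrt n := by rw [Finset.sum_mul]
    _ ≤ n * Real.sqrt n := mul_le_mul_of_nonneg_right hsum hs
    _ = n ^ ((3:ℝ)/2) := by
        rw [show (3:ℝ)/2 = 1 + 1/2 by norm_num, Real.rpow_add' hn (by norm_num),
          Real.rpow_one, ← Real.sqrt_eq_rpow]
end

section
/- Let Σ be an alphabet and work over the extended alphabet Σ ∪ {$} where $ ∉ Σ (formally, over Option Σ with $ represented by the extra symbol). Define h(c) = $ c c $ for each letter c ∈ Σ, i.e., h maps a letter c to the four-letter word [$, c, c, $], and extend h to words by concatenating the images of the letters. Then for every word w over Σ, w is a palindrome if and only if h(w) is a palindrome. -/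
/-- The morphism mapping each letter `c` to the four-letter word `$ c c $`,
where `$` is a fresh symbol (`none`) not in the alphabet (letters `c` are
represented by `some c`). -/
def dollarMorphism {A : Type*} : List A → List (Option A)
  | [] => []
  | c :: w => none :: some c :: some c :: none :: dollarMorphism w

lemma dollarMorphism_append {A : Type*} (u v : List A) :
    dollarMorphism (u ++ v) = dollarMorphism u ++ dollarMorphism v := by
  induction u with
  | nil => simp [dollarMorphism]
  | cons c u ih => simp [dollarMorphism, ih]

lemma dollarMorphism_reverse {A : Type*} (w : List A) :
    (dollarMorphism w).reverse = dollarMorphism w.reverse := by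
  induction w with
  | nil => simp [dollarMorphism]
  | cons c w ih =>
      simp [dollarMorphism, dollarMorphism_append, ih]

lemma dollarMorphism_inj {A : Type*} : ∀ u v : List A,
    dollarMorphism u = dollarMorphism v → u = v
  | [], [], _ => rfl
  | [], _ :: _, h => by simp [dollarMorphism] at h
  | _ :: _, [], h => by simp [dollarMorphism] at h
  | a :: u, b :: v, h => by
      simp only [dollarMorphism, List.cons.injEq] at h
      obtain ⟨-, hab, -, -, huv⟩ := h
      rw [Option.some.injEq] at hab
      rw [hab, dollarMorphism_inj u v huv]

/-- A word `w` is a palindrome if and only if its image under the morphism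
`c ↦ $ c c $` is a palindrome. -/
theorem pal_iff_dollarMorphism_pal {A : Type*} (w : List A) :
    w.reverse = w ↔ (dollarMorphism w).reverse = dollarMorphism w := by
  rw [dollarMorphism_reverse]
  exact ⟨fun h => by rw [h], fun h => dollarMorphism_inj _ _ h⟩
end
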